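/- Let E_min < E_max, η_c, η_d ∈ (0,1], p_c^{max}, p_d^{max} ≥ 0, V ≥ 0 and price/degradation constants satisfying V·((1/η_c)c_g^{b,max} - η_d·c_g^{b,min} + c_b(η_d + 1/η_c)) ≤ E_max - E_min - η_c·p_c^{max} - p_d^{max}/η_d. If E(t) satisfies p_d^{max}/η_d + E_min ≤ E(t) ≤ V·((1/η_c)c_g^{b,max} - η_d·c_g^{b,min} + c_b(η_d + 1/η_c)) + p_d^{max}/η_d + E_min, and E(t+1) = E(t) - (1/η_d)p^d + η_c·p^c for some 0 ≤ p^d ≤ p_d^{max}, 0 ≤ p^c ≤ p_c^{max}, then E_min ≤ E(t+1) ≤ E_max. -/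
import Mathlib

theorem stmt_8 (Emin Emax ηc ηd pcmax pdmax V cgmax cgmin cb Et Et1 pd pc : ℝ)
    (hE : Emin < Emax)
    (hηc : 0 < ηc) (hηc1 : ηc ≤ 1) (hηd : 0 < ηd) (hηd1 : ηd ≤ 1)
    (hpc : 0 ≤ pcmax) (hpd : 0 ≤ pdmax) (hV : 0 ≤ V)
    (hVmax : V * ((1/ηc) * cgmax - ηd * cgmin + cb * (ηd + 1/ηc))
      ≤ Emax - Emin - ηc * pcmax - pdmax / ηd)
    (hlo : pdmax / ηd + Emin ≤ Et)
    (hhi : Et ≤ V * ((1/ηc) * cgmax - ηd * cgmin + cb * (ηd + 1/ηc))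
      + pdmax / ηd + Emin)
    (hpd0 : 0 ≤ pd) (hpdM : pd ≤ pdmax) (hpc0 : 0 ≤ pc) (hpcM : pc ≤ pcmax)
    (hdyn : Et1 = Et - (1/ηd) * pd + ηc * pc) :
    Emin ≤ Et1 ∧ Et1 ≤ Emax := by
  have h1 : pd / ηd ≤ pdmax / ηd := by gcongr
  have h2 : ηc * pc ≤ ηc * pcmax := by gcongr
  constructor
  · have : 0 ≤ ηc * pc := mul_nonneg hηc.le hpc0
    have h4 : ηd⁻¹ * pd = pd / ηd := by ring
    rw [hdyn, one_div, h4]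
    linarith
  · rw [hdyn, one_div]
    have h3 : 0 ≤ ηd⁻¹ * pd := mul_nonneg (inv_nonneg.2 hηd.le) hpd0
    linarith
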